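/- arXiv:1602.08836 — 4 statements merged into one kernel-verified Lean document; each statement's English description precedes it below -/
import Mathlib

section
/- For independent nonnegative random variables X and Y with Y having finite expectation, E[ln(1 + X/(Y+1))] = ∫₀^∞ (M_Y(z)(1 − M_X(z)) e^{−z}/z) dz, where M_X(z) = E[e^{−zX}] and M_Y(z) = E[e^{−zY}] denote the Laplace transforms (MGFs with negative argument) of X and Y. -/
open MeasureTheory ProbabilityTheory Real Set
open scoped ENNReal

lemma exp_lintegral_Ioi {t : ℝ} (ht : 0 < t) :
    ∫⁻ z in Ioi (0:ℝ), ENNReal.ofReal (Real.exp (-(z * t))) = ENNReal.ofReal (1 / t) := by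
  have hint : IntegrableOn (fun z : ℝ => Real.exp (-(z * t))) (Ioi 0) := by
    simpa [mul_comm] using exp_neg_integrableOn_Ioi 0 ht
  rw [← ofReal_integral_eq_lintegral_ofReal hint (ae_of_all _ fun z => (exp_pos _).le)]
  congr 1
  have := integral_comp_mul_left_Ioi (fun x => Real.exp (-x)) 0 ht
  simp only [mul_zero, integral_exp_neg_Ioi, neg_zero, exp_zero, smul_eq_mul, mul_one] at this
  calc ∫ z in Ioi (0:ℝ), Real.exp (-(z * t)) = ∫ z in Ioi (0:ℝ), Real.exp (-(t * z)) := by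
        simp [mul_comm]
    _ = t⁻¹ := this
    _ = 1 / t := (one_div t).symm

lemma frullani_aux {a b : ℝ} (ha : 0 < a) (hab : a ≤ b) :
    ∫⁻ z in Ioi (0:ℝ), ENNReal.ofReal ((Real.exp (-(z * a)) - Real.exp (-(z * b))) / z)
      = ENNReal.ofReal (Real.log b - Real.log a) := by
  have hb : 0 < b := ha.trans_le hab
  -- pointwise: the integrand equals an interval integral
  have key : ∀ z ∈ Ioi (0:ℝ),
      (Real.exp (-(z * a)) - Real.exp (-(z * b))) / z = ∫ t in Ioc a b, Real.exp (-(z * t)) := by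
    intro z hz
    have hz' : (0:ℝ) < z := hz
    rw [← intervalIntegral.integral_of_le hab]
    have hderiv : ∀ t ∈ uIcc a b, HasDerivAt (fun t => -Real.exp (-(z * t)) / z)
        (Real.exp (-(z * t))) t := by
      intro t _
      have h1 : HasDerivAt (fun t : ℝ => -(z * t)) (-z) t := by
        simpa using ((hasDerivAt_id t).const_mul z).fun_neg
      have := (h1.exp.fun_neg.div_const z)
      refine this.congr_deriv ?_
      rw [div_eq_iff hz'.ne']; ring
    rw [intervalIntegral.integral_eq_sub_of_hasDerivAt hderiv
      (((continuous_exp.comp ((continuous_const.mul continuous_id).neg))).intervalIntegrable a b)]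
    field_simp
    ring
  rw [setLIntegral_congr_fun measurableSet_Ioi
    (fun z hz => by rw [key z hz])]
  -- turn inner integral into lintegral
  have step2 : ∀ z ∈ Ioi (0:ℝ),
      ENNReal.ofReal (∫ t in Ioc a b, Real.exp (-(z * t)))
        = ∫⁻ t in Ioc a b, ENNReal.ofReal (Real.exp (-(z * t))) := by
    intro z _
    refine ofReal_integral_eq_lintegral_ofReal ?_ (ae_of_all _ fun t => (exp_pos _).le)
    exact (Continuous.integrableOn_Ioc (by continuity))
  rw [setLIntegral_congr_fun measurableSet_Ioi step2]
  -- swap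
  have hmeas : AEMeasurable (Function.uncurry fun z t => ENNReal.ofReal (Real.exp (-(z * t))))
      ((volume.restrict (Ioi (0:ℝ))).prod (volume.restrict (Ioc a b))) := by
    refine Measurable.aemeasurable ?_
    apply Measurable.ennreal_ofReal
    exact (measurable_fst.mul measurable_snd).neg.exp
  rw [lintegral_lintegral_swap hmeas]
  have step3 : ∀ t ∈ Ioc a b,
      (∫⁻ z in Ioi (0:ℝ), ENNReal.ofReal (Real.exp (-(z * t)))) = ENNReal.ofReal (1 / t) := by
    intro t ht
    exact exp_lintegral_Ioi (ha.trans_le ht.1.le)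
  rw [setLIntegral_congr_fun measurableSet_Ioc step3]
  have hint : IntegrableOn (fun t : ℝ => 1 / t) (Ioc a b) := by
    have hc : ContinuousOn (fun t : ℝ => 1 / t) (Icc a b) := by
      apply ContinuousOn.div continuousOn_const continuousOn_id
      intro t ht; exact (ha.trans_le ht.1).ne'
    exact (hc.integrableOn_compact isCompact_Icc).mono_set Ioc_subset_Icc_self
  rw [← ofReal_integral_eq_lintegral_ofReal hint
    (ae_restrict_of_ae_restrict_of_subset Ioc_subset_Icc_self
      ((ae_restrict_iff' measurableSet_Icc).2 (ae_of_all _ fun t ht => by have := ha.trans_le ht.1; positivity)))]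
  congr 1
  rw [← intervalIntegral.integral_of_le hab, integral_one_div,
    Real.log_div ((ha.trans_le hab).ne') ha.ne']
  intro h
  simp only [Set.mem_uIcc] at h
  rcases h with ⟨h1, _⟩ | ⟨_, h2⟩ <;> linarith

/-- **Hamdi's integral lemma.** For independent nonnegative random variables
`X` and `Y` with `Y` integrable,
`E[ln(1 + X/(Y+1))] = ∫₀^∞ M_Y(z) (1 − M_X(z)) e^{−z}/z dz`,
where `M_X(z) = E[e^{−zX}]` and `M_Y(z) = E[e^{−zY}]`. -/
theorem hamdi_lemma
    {Ω : Type*} [MeasurableSpace Ω] (μ : Measure Ω) [IsProbabilityMeasure μ]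
    (X Y : Ω → ℝ) (hX : Measurable X) (hY : Measurable Y)
    (hXpos : ∀ ω, 0 ≤ X ω) (hYpos : ∀ ω, 0 ≤ Y ω)
    (hindep : IndepFun X Y μ) (hYint : Integrable Y μ) :
    ∫ ω, Real.log (1 + X ω / (Y ω + 1)) ∂μ =
      ∫ z in Ioi (0 : ℝ),
        (∫ ω, Real.exp (-z * Y ω) ∂μ) * (1 - ∫ ω, Real.exp (-z * X ω) ∂μ) *
          Real.exp (-z) / z := by

  -- basic facts
  have hY1 : ∀ ω, (0:ℝ) < Y ω + 1 := fun ω => by have := hYpos ω; linarith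
  -- integrability of bounded exponentials
  have intExp : ∀ (z : ℝ), 0 ≤ z → ∀ (W : Ω → ℝ), Measurable W → (∀ ω, 0 ≤ W ω) →
      Integrable (fun ω => Real.exp (-z * W ω)) μ := by
    intro z hz W hW hWpos
    refine Integrable.mono' (integrable_const 1) ((hW.const_mul (-z)).exp).aestronglyMeasurable
      (ae_of_all _ fun ω => ?_)
    rw [Real.norm_eq_abs, abs_of_pos (exp_pos _)]
    apply Real.exp_le_one_iff.2
    have := hWpos ω
    nlinarith
  -- nonnegativity and boundedness of MX
  have hMXle : ∀ z : ℝ, 0 ≤ z → (∫ ω, Real.exp (-z * X ω) ∂μ) ≤ 1 := by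
    intro z hz
    calc (∫ ω, Real.exp (-z * X ω) ∂μ) ≤ ∫ _, (1:ℝ) ∂μ := by
          refine integral_mono (intExp z hz X hX hXpos) (integrable_const 1) fun ω => ?_
          apply Real.exp_le_one_iff.2; have := hXpos ω; nlinarith
      _ = 1 := by simp
  -- the kernel
  set F : Ω → ℝ → ℝ≥0∞ := fun ω z =>
    ENNReal.ofReal ((Real.exp (-(z * (Y ω + 1))) - Real.exp (-(z * (X ω + Y ω + 1)))) / z)
    with hF
  -- pointwise Frullani
  have hBpt : ∀ ω, ENNReal.ofReal (Real.log (1 + X ω / (Y ω + 1)))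
      = ∫⁻ z in Ioi (0:ℝ), F ω z := by
    intro ω
    rw [hF, frullani_aux (hY1 ω) (by have := hXpos ω; linarith)]
    congr 1
    have h1 : 1 + X ω / (Y ω + 1) = (X ω + Y ω + 1) / (Y ω + 1) := by
      rw [show X ω + Y ω + 1 = X ω + (Y ω + 1) by ring, _root_.add_div,
        div_self (hY1 ω).ne', add_comm]
    have h2 : (0:ℝ) < X ω + Y ω + 1 := by have := hXpos ω; have := hY1 ω; linarith
    rw [h1, Real.log_div h2.ne' (hY1 ω).ne']
  -- measurability of the kernel on the product
  have hFm : Measurable (Function.uncurry F) := by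
    apply Measurable.ennreal_ofReal
    apply Measurable.div _ measurable_snd
    apply Measurable.sub
    · exact (((measurable_snd.mul ((hY.comp measurable_fst).add measurable_const)).neg).exp)
    · exact (((measurable_snd.mul (((hX.comp measurable_fst).add
        (hY.comp measurable_fst)).add measurable_const)).neg).exp)
  -- per-z computation of the inner integral
  have hinner : ∀ z ∈ Ioi (0:ℝ), (∫⁻ ω, F ω z ∂μ)
      = ENNReal.ofReal ((∫ ω, Real.exp (-z * Y ω) ∂μ) *
          (1 - ∫ ω, Real.exp (-z * X ω) ∂μ) * Real.exp (-z) / z) := by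
    intro z hz
    have hz' : (0:ℝ) < z := hz
    set h : Ω → ℝ := fun ω =>
      (Real.exp (-(z * (Y ω + 1))) - Real.exp (-(z * (X ω + Y ω + 1)))) / z with hh
    have hexpand : ∀ ω, h ω = (Real.exp (-z) * Real.exp (-z * Y ω)
        - Real.exp (-z) * (Real.exp (-z * X ω) * Real.exp (-z * Y ω))) / z := by
      intro ω
      simp only [hh]
      rw [show -(z * (Y ω + 1)) = -z * Y ω + -z by ring,
        show -(z * (X ω + Y ω + 1)) = -z * X ω + (-z * Y ω + -z) by ring,
        Real.exp_add, Real.exp_add, Real.exp_add]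
      ring
    have intY' := intExp z hz'.le Y hY hYpos
    have intX' := intExp z hz'.le X hX hXpos
    have intXY : Integrable (fun ω => Real.exp (-z * X ω) * Real.exp (-z * Y ω)) μ := by
      refine Integrable.mono' (integrable_const 1)
        (((hX.const_mul (-z)).exp.mul (hY.const_mul (-z)).exp)).aestronglyMeasurable
        (ae_of_all _ fun ω => ?_)
      rw [Real.norm_eq_abs, abs_of_pos (by positivity)]
      have h1 : Real.exp (-z * X ω) ≤ 1 := by
        apply Real.exp_le_one_iff.2; have := hXpos ω; nlinarith
      have h2 : Real.exp (-z * Y ω) ≤ 1 := by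
        apply Real.exp_le_one_iff.2; have := hYpos ω; nlinarith
      nlinarith [Real.exp_pos (-z * X ω), Real.exp_pos (-z * Y ω)]
    have hInt : Integrable h μ :=
      ((((intY'.const_mul _).sub (intXY.const_mul _)).div_const z)).congr
        (ae_of_all _ fun ω => (hexpand ω).symm)
    have hnn : ∀ ω, 0 ≤ h ω := by
      intro ω
      rw [hh]
      apply div_nonneg _ hz'.le
      have : z * (Y ω + 1) ≤ z * (X ω + Y ω + 1) := by
        apply mul_le_mul_of_nonneg_left _ hz'.le
        have := hXpos ω; linarith
      have := Real.exp_le_exp.2 (neg_le_neg this)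
      linarith
    have : (∫⁻ ω, F ω z ∂μ) = ∫⁻ ω, ENNReal.ofReal (h ω) ∂μ := rfl
    rw [this, ← ofReal_integral_eq_lintegral_ofReal hInt (ae_of_all _ hnn)]
    congr 1
    have hIXY : (∫ ω, Real.exp (-z * X ω) * Real.exp (-z * Y ω) ∂μ)
        = (∫ ω, Real.exp (-z * X ω) ∂μ) * (∫ ω, Real.exp (-z * Y ω) ∂μ) := by
      have hci : IndepFun (fun ω => Real.exp (-z * X ω)) (fun ω => Real.exp (-z * Y ω)) μ :=
        hindep.comp (measurable_const_mul (-z)).exp (measurable_const_mul (-z)).exp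
      exact hci.integral_mul_eq_mul_integral intX'.aestronglyMeasurable intY'.aestronglyMeasurable
    calc ∫ ω, h ω ∂μ
        = ∫ ω, (Real.exp (-z) * Real.exp (-z * Y ω)
            - Real.exp (-z) * (Real.exp (-z * X ω) * Real.exp (-z * Y ω))) / z ∂μ :=
          integral_congr_ae (ae_of_all _ hexpand)
      _ = ((∫ ω, Real.exp (-z) * Real.exp (-z * Y ω) ∂μ)
            - ∫ ω, Real.exp (-z) * (Real.exp (-z * X ω) * Real.exp (-z * Y ω)) ∂μ) / z := by
          rw [integral_div, integral_sub (intY'.const_mul _) (intXY.const_mul _)]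
      _ = (Real.exp (-z) * (∫ ω, Real.exp (-z * Y ω) ∂μ)
            - Real.exp (-z) * ((∫ ω, Real.exp (-z * X ω) ∂μ) * (∫ ω, Real.exp (-z * Y ω) ∂μ))) / z := by
          rw [integral_const_mul, integral_const_mul, hIXY]
      _ = (∫ ω, Real.exp (-z * Y ω) ∂μ) * (1 - ∫ ω, Real.exp (-z * X ω) ∂μ)
            * Real.exp (-z) / z := by ring
  -- strong measurability of z ↦ ∫ exp(-z W)
  have hSM : ∀ (W : Ω → ℝ), Measurable W →
      StronglyMeasurable (fun z : ℝ => ∫ ω, Real.exp (-z * W ω) ∂μ) := by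
    intro W hW
    have : StronglyMeasurable (fun p : ℝ × Ω => Real.exp (-p.1 * W p.2)) :=
      (((measurable_fst.neg.mul (hW.comp measurable_snd))).exp).stronglyMeasurable
    exact this.integral_prod_right'
  -- rewrite both sides via lintegrals
  have hfmeas : Measurable (fun ω => Real.log (1 + X ω / (Y ω + 1))) :=
    Real.measurable_log.comp (measurable_const.add (hX.div (hY.add measurable_const)))
  have hfnn : ∀ ω, 0 ≤ Real.log (1 + X ω / (Y ω + 1)) := by
    intro ω
    apply Real.log_nonneg
    have : 0 ≤ X ω / (Y ω + 1) := div_nonneg (hXpos ω) (hY1 ω).le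
    linarith
  set g : ℝ → ℝ := fun z => (∫ ω, Real.exp (-z * Y ω) ∂μ) *
      (1 - ∫ ω, Real.exp (-z * X ω) ∂μ) * Real.exp (-z) / z with hg
  have hgmeas : Measurable g := by
    apply Measurable.div _ measurable_id
    exact ((hSM Y hY).measurable.mul
      (measurable_const.sub (hSM X hX).measurable)).mul (measurable_id.neg.exp)
  have hgnn : ∀ z ∈ Ioi (0:ℝ), 0 ≤ g z := by
    intro z hz
    have hz' : (0:ℝ) < z := hz
    apply div_nonneg _ hz'.le
    apply mul_nonneg _ (Real.exp_pos _).le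
    apply mul_nonneg (integral_nonneg fun ω => (Real.exp_pos _).le)
    have := hMXle z hz'.le
    linarith
  rw [integral_eq_lintegral_of_nonneg_ae (ae_of_all _ hfnn) hfmeas.aestronglyMeasurable,
    integral_eq_lintegral_of_nonneg_ae
      ((ae_restrict_iff' measurableSet_Ioi).2 (ae_of_all _ hgnn))
      hgmeas.aestronglyMeasurable.restrict]
  congr 1
  calc ∫⁻ ω, ENNReal.ofReal (Real.log (1 + X ω / (Y ω + 1))) ∂μ
      = ∫⁻ ω, (∫⁻ z in Ioi (0:ℝ), F ω z) ∂μ := lintegral_congr hBpt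
    _ = ∫⁻ z in Ioi (0:ℝ), ∫⁻ ω, F ω z ∂μ := lintegral_lintegral_swap hFm.aemeasurable
    _ = ∫⁻ z in Ioi (0:ℝ), ENNReal.ofReal (g z) :=
        setLIntegral_congr_fun measurableSet_Ioi hinner
end

section
/- For the standard singular path loss model (ε = 0), the Laplace transform of the Poisson shot noise S = Σ_{x∈Φ} X_x ‖x‖^{−α} with i.i.d. Gamma(M,1) marks X_x equals E[e^{−sS}] = exp(Γ_δ · s^δ) for s > 0, where δ = 2/α ∈ (0,1) and Γ_δ = (δ π λ' / Γ(M)) · Γ(M + δ) · Γ(−δ) < 0. -/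
open MeasureTheory ProbabilityTheory Real Set
open scoped ENNReal

/-- `negExp a = e^{-a}` for extended nonnegative reals (with `e^{-∞} = 0`). -/
noncomputable def negExp (a : ℝ≥0∞) : ℝ≥0∞ :=
  if a = ∞ then 0 else ENNReal.ofReal (Real.exp (-a.toReal))

lemma measurable_negExp : Measurable negExp := by
  unfold negExp
  refine Measurable.ite ?_ measurable_const
    ((ENNReal.measurable_toReal.neg).exp.ennreal_ofReal)
  simpa [Set.setOf_eq_eq_singleton] using MeasurableSet.singleton (∞ : ℝ≥0∞)

lemma negExp_ofReal {a : ℝ} (ha : 0 ≤ a) :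
    negExp (ENNReal.ofReal a) = ENNReal.ofReal (Real.exp (-a)) := by
  simp [negExp, ENNReal.ofReal_ne_top, ENNReal.toReal_ofReal ha]

lemma one_sub_negExp {a : ℝ} (ha : 0 ≤ a) :
    1 - negExp (ENNReal.ofReal a) = ENNReal.ofReal (1 - Real.exp (-a)) := by
  rw [negExp_ofReal ha, ENNReal.ofReal_sub _ (Real.exp_nonneg _), ENNReal.ofReal_one]

lemma vol_ball_one : (volume : Measure (EuclideanSpace ℝ (Fin 2))) (Metric.ball 0 1) =
    ENNReal.ofReal π := by
  rw [EuclideanSpace.volume_ball]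
  norm_num [Real.Gamma_two, Real.sq_sqrt Real.pi_nonneg]

lemma lintegral_norm_euclidean (g : ℝ → ℝ≥0∞) (hg : Measurable g) :
    ∫⁻ x : EuclideanSpace ℝ (Fin 2), g ‖x‖ =
      ENNReal.ofReal (2 * π) * ∫⁻ y in Ioi (0:ℝ), ENNReal.ofReal y * g y := by
  set E2 := EuclideanSpace ℝ (Fin 2)
  have hdim : Module.finrank ℝ E2 = 2 := by
    simp [E2, finrank_euclideanSpace]
  have hmeas : Measurable fun p : Metric.sphere (0:E2) 1 × Ioi (0:ℝ) => g p.2 :=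
    hg.comp (measurable_subtype_coe.comp measurable_snd)
  have h0 : ∫⁻ x : E2, g ‖x‖ =
      ∫⁻ x : ({0}ᶜ : Set E2), g ‖(x : E2)‖ ∂((volume : Measure E2).comap (↑)) := by
    rw [lintegral_subtype_comap (measurableSet_singleton (0:E2)).compl (fun x => g ‖x‖),
      restrict_compl_singleton]
  have hmp := (volume : Measure E2).measurePreserving_homeomorphUnitSphereProd
  rw [hdim] at hmp
  have h1 := hmp.lintegral_comp (g := homeomorphUnitSphereProd E2) hmeas
  have h2 : ∫⁻ p : Metric.sphere (0:E2) 1 × Ioi (0:ℝ), g p.2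
      ∂((volume : Measure E2).toSphere.prod (.volumeIoiPow (2-1))) =
      (volume : Measure E2).toSphere univ * ∫⁻ r : Ioi (0:ℝ), g r ∂(.volumeIoiPow 1) := by
    rw [lintegral_prod _ hmeas.aemeasurable]
    simp [lintegral_const, mul_comm]
  have h3 : (volume : Measure E2).toSphere univ = 2 * ENNReal.ofReal π := by
    rw [Measure.toSphere_apply_univ, vol_ball_one, hdim]
    norm_num
  have h4 : ∫⁻ r : Ioi (0:ℝ), g r ∂(.volumeIoiPow 1) =
      ∫⁻ y in Ioi (0:ℝ), ENNReal.ofReal y * g y := by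
    rw [Measure.volumeIoiPow,
      lintegral_withDensity_eq_lintegral_mul _
        ((measurable_subtype_coe.pow_const 1).ennreal_ofReal)
        (g := fun r : Ioi (0:ℝ) => g ↑r) (hg.comp measurable_subtype_coe)]
    simp only [Pi.mul_apply]
    rw [lintegral_subtype_comap measurableSet_Ioi (fun y => ENNReal.ofReal (y ^ 1) * g y)]
    simp
  have h5 : ∀ x : ({0}ᶜ : Set E2),
      g ((homeomorphUnitSphereProd E2 x).2 : ℝ) = g ‖(x : E2)‖ := by
    intro x; simp
  calc ∫⁻ x : E2, g ‖x‖
      = ∫⁻ x : ({0}ᶜ : Set E2), g ‖(x : E2)‖ ∂((volume : Measure E2).comap (↑)) := h0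
    _ = ∫⁻ p : Metric.sphere (0:E2) 1 × Ioi (0:ℝ), g p.2
        ∂((volume : Measure E2).toSphere.prod (.volumeIoiPow (2-1))) := by
        rw [← h1]; exact lintegral_congr fun x => (h5 x).symm
    _ = ENNReal.ofReal (2 * π) * ∫⁻ y in Ioi (0:ℝ), ENNReal.ofReal y * g y := by
        rw [h2, h3, h4, ENNReal.ofReal_mul (by norm_num : (0:ℝ) ≤ 2)]
        norm_num

lemma lintegral_image_eq_lintegral_abs_deriv_mul' {s : Set ℝ} {f f' : ℝ → ℝ}
    (hs : MeasurableSet s) (hf' : ∀ x ∈ s, HasDerivWithinAt f (f' x) s x)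
    (hf : InjOn f s) (g : ℝ → ℝ≥0∞) :
    ∫⁻ x in f '' s, g x = ∫⁻ x in s, ENNReal.ofReal |f' x| * g (f x) := by
  simpa only [ContinuousLinearMap.det_toSpanSingleton] using
    MeasureTheory.lintegral_image_eq_lintegral_abs_det_fderiv_mul volume hs
      (fun x hx => (hf' x hx).hasFDerivWithinAt) hf g

lemma lemC {α δ t : ℝ} (hα : 2 < α) (hδ : δ = 2 / α) (ht : 0 < t) :
    ∫⁻ y in Ioi (0:ℝ), ENNReal.ofReal y * ENNReal.ofReal (1 - Real.exp (-(t * y ^ (-α)))) =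
      ENNReal.ofReal (t ^ δ / α) *
        ∫⁻ u in Ioi (0:ℝ), ENNReal.ofReal (u ^ (-(1+δ)) * (1 - Real.exp (-u))) := by
  have hα0 : (0:ℝ) < α := by linarith
  have hδ0 : 0 < δ := by rw [hδ]; positivity
  have hαδ : α * δ = 2 := by rw [hδ]; field_simp
  set φ : ℝ → ℝ := fun y => t * y ^ (-α) with hφ
  have himg : φ '' Ioi 0 = Ioi 0 := by
    ext u
    constructor
    · rintro ⟨y, hy, rfl⟩
      exact mul_pos ht (Real.rpow_pos_of_pos hy _)
    · intro hu
      have hdu : (0:ℝ) < t / u := div_pos ht hu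
      refine ⟨(t/u) ^ (α⁻¹), Real.rpow_pos_of_pos hdu _, ?_⟩
      have h1 : ((t/u) ^ (α⁻¹)) ^ (-α) = (t/u) ^ (α⁻¹ * (-α)) :=
        (Real.rpow_mul hdu.le _ _).symm
      have h2 : α⁻¹ * (-α) = -1 := by field_simp
      simp only [hφ, h1, h2, Real.rpow_neg_one]
      field_simp
  have hinj : InjOn φ (Ioi 0) := by
    intro y1 h1 y2 h2 heq
    have h3 : y1 ^ (-α) = y2 ^ (-α) := mul_left_cancel₀ ht.ne' heq
    have key : ∀ y : ℝ, y ∈ Ioi (0:ℝ) → (y ^ (-α)) ^ ((-α)⁻¹) = y := by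
      intro y hy
      rw [← Real.rpow_mul (le_of_lt hy), mul_inv_cancel₀ (neg_ne_zero.2 hα0.ne'),
        Real.rpow_one]
    rw [← key y1 h1, ← key y2 h2, h3]
  have hderiv : ∀ y ∈ Ioi (0:ℝ),
      HasDerivWithinAt φ (t * (-α * y ^ (-α - 1))) (Ioi 0) y := by
    intro y hy
    exact ((Real.hasDerivAt_rpow_const (Or.inl (ne_of_gt hy))).const_mul t).hasDerivWithinAt
  rw [← lintegral_const_mul _ (by fun_prop)]
  rw [show (Ioi (0:ℝ)) = φ '' Ioi 0 from himg.symm]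
  rw [lintegral_image_eq_lintegral_abs_deriv_mul' measurableSet_Ioi hderiv hinj
    (fun u => ENNReal.ofReal (t ^ δ / α) * ENNReal.ofReal (u ^ (-(1+δ)) * (1 - Real.exp (-u))))]
  rw [himg]
  refine setLIntegral_congr_fun measurableSet_Ioi (fun y hy => ?_)
  have hy : (0:ℝ) < y := hy
  have hyα : (0:ℝ) < y ^ (-α) := Real.rpow_pos_of_pos hy _
  have hyα1 : (0:ℝ) < y ^ (-α - 1) := Real.rpow_pos_of_pos hy _
  have habs : |t * (-α * y ^ (-α - 1))| = t * α * y ^ (-α - 1) := by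
    have h : t * (-α * y ^ (-α - 1)) = -(t * α * y ^ (-α - 1)) := by ring
    rw [h, abs_neg, abs_of_pos (by positivity)]
  rw [habs]
  have e1 : (t * y ^ (-α)) ^ (-(1+δ)) = t ^ (-(1+δ)) * y ^ (α * (1+δ)) := by
    rw [Real.mul_rpow ht.le hyα.le, ← Real.rpow_mul hy.le]
    congr 2
    ring
  have e2 : t * t ^ δ * t ^ (-(1+δ)) = 1 := by
    have h : t * t ^ δ = t ^ (1 + δ) := by rw [Real.rpow_add ht, Real.rpow_one]
    rw [h, ← Real.rpow_add ht, add_neg_cancel, Real.rpow_zero]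
  have e3 : y ^ (-α - 1) * y ^ (α * (1+δ)) = y := by
    rw [← Real.rpow_add hy]
    have h : -α - 1 + α * (1+δ) = 1 := by linear_combination hαδ
    rw [h, Real.rpow_one]
  have key : t * α * y ^ (-α - 1) * (t ^ δ / α * (t * y ^ (-α)) ^ (-(1+δ))) = y := by
    rw [e1]
    have expand : t * α * y ^ (-α - 1) * (t ^ δ / α * (t ^ (-(1+δ)) * y ^ (α * (1+δ)))) =
        (t * t ^ δ * t ^ (-(1+δ))) * (y ^ (-α - 1) * y ^ (α * (1+δ))) * (α / α) := by
      ring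
    rw [expand, e2, e3, div_self hα0.ne', one_mul, mul_one]
  rw [← ENNReal.ofReal_mul (by positivity), ← ENNReal.ofReal_mul (by positivity),
    ← ENNReal.ofReal_mul (by positivity)]
  congr 1
  simp only [hφ]
  calc y * (1 - Real.exp (-(t * y ^ (-α))))
      = (t * α * y ^ (-α - 1) * (t ^ δ / α * (t * y ^ (-α)) ^ (-(1+δ)))) *
          (1 - Real.exp (-(t * y ^ (-α)))) := by rw [key]
    _ = t * α * y ^ (-α - 1) * (t ^ δ / α * ((t * y ^ (-α)) ^ (-(1+δ)) *
          (1 - Real.exp (-(t * y ^ (-α)))))) := by ring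

lemma lemD {δ : ℝ} (hδ0 : 0 < δ) (hδ1 : δ < 1) :
    ∫⁻ u in Ioi (0:ℝ), ENNReal.ofReal (u ^ (-(1+δ)) * (1 - Real.exp (-u))) =
      ENNReal.ofReal (Real.Gamma (1 - δ) / δ) := by
  set F : ℝ → ℝ → ℝ≥0∞ := fun u z =>
    if z ≤ u then ENNReal.ofReal (u ^ (-(1+δ)) * Real.exp (-z)) else 0 with hF
  have hFmeas : Measurable (Function.uncurry F) := by
    apply Measurable.ite (measurableSet_le measurable_snd measurable_fst)
    · have : Measurable fun p : ℝ × ℝ => p.1 ^ (-(1+δ)) * Real.exp (-p.2) := by fun_prop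
      exact this.ennreal_ofReal
    · exact measurable_const
  have hD1 : ∀ u : ℝ, 0 < u →
      ∫⁻ z in Ioc (0:ℝ) u, ENNReal.ofReal (Real.exp (-z)) = ENNReal.ofReal (1 - Real.exp (-u)) := by
    intro u hu
    rw [← ofReal_integral_eq_lintegral_ofReal
      (show Integrable (fun z => Real.exp (-z)) (volume.restrict (Ioc (0:ℝ) u)) from
        (Real.continuous_exp.comp continuous_neg).integrableOn_Ioc)
      (ae_of_all _ fun z => Real.exp_nonneg _)]
    congr 1
    rw [← intervalIntegral.integral_of_le hu.le,
      intervalIntegral.integral_comp_neg (fun z => Real.exp z)]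
    simp [integral_exp]
  have step1 : ∫⁻ u in Ioi (0:ℝ), ENNReal.ofReal (u ^ (-(1+δ)) * (1 - Real.exp (-u))) =
      ∫⁻ u in Ioi (0:ℝ), ∫⁻ z in Ioi (0:ℝ), F u z := by
    refine setLIntegral_congr_fun measurableSet_Ioi (fun u hu => ?_)
    have hu : (0:ℝ) < u := hu
    have : ∀ z : ℝ, F u z = (Iic u).indicator
        (fun z => ENNReal.ofReal (u ^ (-(1+δ)) * Real.exp (-z))) z := by
      intro z
      simp only [hF, indicator, mem_Iic]
    simp only [this]
    rw [lintegral_indicator measurableSet_Iic, Measure.restrict_restrict measurableSet_Iic]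
    have hset : Iic u ∩ Ioi 0 = Ioc 0 u := by
      ext z; simp [mem_Iic, mem_Ioi, mem_Ioc, and_comm]
    rw [hset]
    have hpull : ∀ z : ℝ, ENNReal.ofReal (u ^ (-(1+δ)) * Real.exp (-z)) =
        ENNReal.ofReal (u ^ (-(1+δ))) * ENNReal.ofReal (Real.exp (-z)) := fun z =>
      ENNReal.ofReal_mul (Real.rpow_nonneg hu.le _)
    simp only [hpull]
    rw [lintegral_const_mul _ (by fun_prop), hD1 u hu,
      ← ENNReal.ofReal_mul (Real.rpow_nonneg hu.le _)]
  rw [step1, lintegral_lintegral_swap hFmeas.aemeasurable]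
  have step2 : ∀ z : ℝ, z ∈ Ioi (0:ℝ) → ∫⁻ u in Ioi (0:ℝ), F u z =
      ENNReal.ofReal (Real.exp (-z) * (z ^ (-δ) / δ)) := by
    intro z hz
    have hz : (0:ℝ) < z := hz
    have : ∀ u : ℝ, F u z = (Ici z).indicator
        (fun u => ENNReal.ofReal (u ^ (-(1+δ)) * Real.exp (-z))) u := by
      intro u
      simp only [hF, indicator, mem_Ici]
    simp only [this]
    rw [lintegral_indicator measurableSet_Ici, Measure.restrict_restrict measurableSet_Ici]
    have hset : Ici z ∩ Ioi 0 = Ici z := by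
      ext u; simp only [mem_inter_iff, mem_Ici, mem_Ioi, and_iff_left_iff_imp]
      intro h; linarith
    rw [hset, ← restrict_Ioi_eq_restrict_Ici]
    have hpull : ∀ u : ℝ, ENNReal.ofReal (u ^ (-(1+δ)) * Real.exp (-z)) =
        ENNReal.ofReal (Real.exp (-z)) * ENNReal.ofReal (u ^ (-(1+δ))) := fun u => by
      rw [mul_comm (u ^ (-(1+δ)))]
      exact ENNReal.ofReal_mul (Real.exp_nonneg _)
    simp only [hpull]
    rw [lintegral_const_mul _ (by fun_prop)]
    have hlt : -(1+δ) < -1 := by linarith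
    have hint : ∫⁻ u in Ioi z, ENNReal.ofReal (u ^ (-(1+δ))) = ENNReal.ofReal (z ^ (-δ) / δ) := by
      rw [← ofReal_integral_eq_lintegral_ofReal (integrableOn_Ioi_rpow_of_lt hlt hz) ?_]
      · rw [integral_Ioi_rpow_of_lt hlt hz]
        congr 1
        have h1 : -(1+δ) + 1 = -δ := by ring
        rw [h1]
        field_simp
      · filter_upwards [ae_restrict_mem measurableSet_Ioi] with u hu
        exact Real.rpow_nonneg (le_of_lt (lt_trans hz hu)) _
    rw [hint, ← ENNReal.ofReal_mul (Real.exp_nonneg _)]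
  rw [setLIntegral_congr_fun measurableSet_Ioi step2]
  have hint : Integrable (fun z => (Real.exp (-z) * z ^ ((1-δ)-1)) / δ)
      (volume.restrict (Ioi (0:ℝ))) :=
    (Real.GammaIntegral_convergent (by linarith : (0:ℝ) < 1 - δ)).div_const δ
  have hint' : Integrable (fun z => Real.exp (-z) * (z ^ (-δ) / δ))
      (volume.restrict (Ioi (0:ℝ))) := by
    have h : ∀ z : ℝ, Real.exp (-z) * (z ^ (-δ) / δ) = (Real.exp (-z) * z ^ ((1-δ)-1)) / δ := by
      intro z
      have : (1:ℝ) - δ - 1 = -δ := by ring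
      rw [this]; ring
    simpa only [h] using hint
  rw [← ofReal_integral_eq_lintegral_ofReal hint' ?_]
  · congr 1
    have h : ∀ z : ℝ, Real.exp (-z) * (z ^ (-δ) / δ) = (Real.exp (-z) * z ^ ((1-δ)-1)) / δ := by
      intro z
      have : (1:ℝ) - δ - 1 = -δ := by ring
      rw [this]; ring
    simp_rw [h]
    rw [integral_div, ← Real.Gamma_eq_integral (by linarith : (0:ℝ) < 1 - δ)]
  · filter_upwards [ae_restrict_mem measurableSet_Ioi] with z hz
    have : (0:ℝ) < z := hz
    positivity

lemma lemE {δ : ℝ} (hδ0 : 0 < δ) {M : ℕ} (hM : 0 < M) :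
    ∫⁻ g, ENNReal.ofReal (g ^ δ) ∂(gammaMeasure M 1) =
      ENNReal.ofReal (Real.Gamma (M + δ) / Real.Gamma M) := by
  have hM' : (0:ℝ) < M := Nat.cast_pos.mpr hM
  have hpdf : Measurable (gammaPDF (M:ℝ) 1) := by
    unfold ProbabilityTheory.gammaPDF
    exact (measurable_gammaPDFReal _ _).ennreal_ofReal
  rw [gammaMeasure, lintegral_withDensity_eq_lintegral_mul _ hpdf (by fun_prop)]
  rw [← lintegral_add_compl (fun g => (gammaPDF (M:ℝ) 1 * fun g => ENNReal.ofReal (g ^ δ)) g)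
    measurableSet_Ioi]
  have hcompl : ∫⁻ g in (Ioi (0:ℝ))ᶜ,
      (gammaPDF (M:ℝ) 1 * fun g => ENNReal.ofReal (g ^ δ)) g = 0 := by
    rw [compl_Ioi]
    rw [setLIntegral_congr_fun measurableSet_Iic
      (fun g (hg : g ≤ 0) => ?_), lintegral_zero]
    rcases lt_or_eq_of_le hg with h | h
    · simp [Pi.mul_apply, gammaPDF_of_neg h]
    · subst h
      rw [Pi.mul_apply, Real.zero_rpow hδ0.ne']
      simp
  rw [hcompl, add_zero]
  have hmain : ∀ g ∈ Ioi (0:ℝ),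
      (gammaPDF (M:ℝ) 1 * fun g => ENNReal.ofReal (g ^ δ)) g =
        ENNReal.ofReal (1 / Real.Gamma M) *
          ENNReal.ofReal (Real.exp (-g) * g ^ (((M:ℝ) + δ) - 1)) := by
    intro g hg
    have hg : (0:ℝ) < g := hg
    rw [Pi.mul_apply, gammaPDF_of_nonneg hg.le]
    rw [← ENNReal.ofReal_mul (by positivity)]
    rw [← ENNReal.ofReal_mul (by positivity)]
    congr 1
    rw [Real.one_rpow, one_mul]
    rw [show (1:ℝ) / Real.Gamma M * (Real.exp (-g) * g ^ (((M:ℝ) + δ) - 1)) =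
      1 / Real.Gamma M * (g ^ (((M:ℝ) - 1) + δ) * Real.exp (-g)) by
        rw [show ((M:ℝ) + δ) - 1 = ((M:ℝ) - 1) + δ by ring]; ring]
    rw [Real.rpow_add hg]
    ring
  rw [setLIntegral_congr_fun measurableSet_Ioi hmain]
  rw [lintegral_const_mul _ (by fun_prop)]
  have hG : ∫⁻ g in Ioi (0:ℝ), ENNReal.ofReal (Real.exp (-g) * g ^ (((M:ℝ) + δ) - 1)) =
      ENNReal.ofReal (Real.Gamma ((M:ℝ) + δ)) := by
    rw [← ofReal_integral_eq_lintegral_ofReal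
      (Real.GammaIntegral_convergent (by linarith : (0:ℝ) < (M:ℝ) + δ)) ?_]
    · rw [← Real.Gamma_eq_integral (by linarith : (0:ℝ) < (M:ℝ) + δ)]
    · filter_upwards [ae_restrict_mem measurableSet_Ioi] with g hg
      have : (0:ℝ) < g := hg
      positivity
  rw [hG, ← ENNReal.ofReal_mul (by positivity)]
  congr 1
  ring

lemma gammaMeasure_ae_pos {M : ℕ} (hM : 0 < M) :
    ∀ᵐ g ∂(gammaMeasure (M:ℝ) 1), g ∈ Ioi (0:ℝ) := by
  rw [ae_iff]
  have hset : {g : ℝ | ¬ g ∈ Ioi (0:ℝ)} = Iic 0 := by ext g; simp [not_lt]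
  rw [hset, ← Iio_union_right]
  refine measure_union_null ?_ ?_
  · rw [gammaMeasure, withDensity_apply _ measurableSet_Iio]
    exact lintegral_gammaPDF_of_nonpos le_rfl
  · rw [gammaMeasure, withDensity_apply _ (measurableSet_singleton 0)]
    rw [setLIntegral_measure_zero _ _ (measure_singleton 0)]

/-- **Laplace transform of Poisson shot noise, singular path loss.**
For the singular path loss model (`ε = 0`), the shot noise
`S = Σ_{(x,g)∈Φ} g‖x‖^{−α}` of a marked PPP with intensity
`λ'·Leb ⊗ Gamma(M,1)` satisfies `E[e^{−sS}] = exp(Γ_δ s^δ)` for `s > 0`,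
where `δ = 2/α ∈ (0,1)` and `Γ_δ = (δπλ'/Γ(M))·Γ(M+δ)·Γ(−δ) < 0`. -/
theorem ppp_shot_noise_laplace_singular
    {Ω : Type*} [MeasurableSpace Ω] (μ : Measure Ω) [IsProbabilityMeasure μ]
    (lam' α : ℝ) (hlam' : 0 < lam') (hα : 2 < α)
    (M : ℕ) (hM : 0 < M)
    (Φ : Ω → Measure (EuclideanSpace ℝ (Fin 2) × ℝ)) (hΦ : Measurable Φ)
    -- Laplace functional characterization of the marked Poisson point process
    (hPGFL : ∀ f : EuclideanSpace ℝ (Fin 2) × ℝ → ℝ≥0∞, Measurable f →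
      ∫⁻ ω, negExp (∫⁻ p, f p ∂(Φ ω)) ∂μ =
        negExp (∫⁻ p, (1 - negExp (f p))
          ∂((ENNReal.ofReal lam') • (volume.prod (gammaMeasure M 1))))) :
    (2 / α * Real.pi * lam' / Real.Gamma M * Real.Gamma (M + 2 / α) *
        Real.Gamma (-(2 / α)) < 0) ∧
    ∀ s : ℝ, 0 < s →
      ∫⁻ ω, negExp (∫⁻ p, ENNReal.ofReal (s * p.2 / ‖p.1‖ ^ α) ∂(Φ ω)) ∂μ =
        ENNReal.ofReal (Real.exp ((2 / α * Real.pi * lam' / Real.Gamma M *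
            Real.Gamma (M + 2 / α) * Real.Gamma (-(2 / α))) * s ^ (2 / α))) := by
  have hα0 : (0:ℝ) < α := by linarith
  set δ : ℝ := 2 / α with hδdef
  have hδ0 : 0 < δ := by rw [hδdef]; positivity
  have hδ1 : δ < 1 := by rw [hδdef, div_lt_one hα0]; linarith
  have hαδ : α * δ = 2 := by rw [hδdef]; field_simp
  have hM' : (0:ℝ) < M := Nat.cast_pos.mpr hM
  have hΓM : 0 < Real.Gamma M := Real.Gamma_pos_of_pos hM'
  have hΓMδ : 0 < Real.Gamma (M + δ) := Real.Gamma_pos_of_pos (by linarith)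
  have hΓ1δ : 0 < Real.Gamma (1 - δ) := Real.Gamma_pos_of_pos (by linarith)
  have hΓrel : Real.Gamma (1 - δ) = -δ * Real.Gamma (-δ) := by
    have h := Real.Gamma_add_one (neg_ne_zero.mpr hδ0.ne')
    rw [show -δ + 1 = 1 - δ by ring] at h
    exact h
  have hΓneg : Real.Gamma (-δ) < 0 := by nlinarith
  have hprob : IsProbabilityMeasure (gammaMeasure (M:ℝ) 1) :=
    isProbabilityMeasure_gammaMeasure hM' one_pos
  constructor
  · have hpos : 0 < δ * Real.pi * lam' / Real.Gamma M * Real.Gamma (M + δ) := by positivity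
    exact mul_neg_of_pos_of_neg hpos hΓneg
  · intro s hs
    have hf : Measurable (fun p : EuclideanSpace ℝ (Fin 2) × ℝ =>
        ENNReal.ofReal (s * p.2 / ‖p.1‖ ^ α)) := by fun_prop
    rw [hPGFL _ hf]
    -- compute the inner intensity integral
    have inner : ∀ g : ℝ, g ∈ Ioi (0:ℝ) →
        ∫⁻ x : EuclideanSpace ℝ (Fin 2),
          (1 - negExp (ENNReal.ofReal (s * g / ‖x‖ ^ α))) =
        ENNReal.ofReal (π * Real.Gamma (1 - δ) * s ^ δ) * ENNReal.ofReal (g ^ δ) := by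
      intro g hg
      have hg : (0:ℝ) < g := hg
      have ht : (0:ℝ) < s * g := mul_pos hs hg
      have hpt : ∀ x : EuclideanSpace ℝ (Fin 2),
          (1 - negExp (ENNReal.ofReal (s * g / ‖x‖ ^ α))) =
          ENNReal.ofReal (1 - Real.exp (-((s * g) * ‖x‖ ^ (-α)))) := by
        intro x
        have hrw : s * g / ‖x‖ ^ α = (s * g) * ‖x‖ ^ (-α) := by
          rw [Real.rpow_neg (norm_nonneg x)]
          ring
        rw [hrw, one_sub_negExp (by positivity)]
      simp only [hpt]
      rw [lintegral_norm_euclidean (fun y => ENNReal.ofReal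
        (1 - Real.exp (-((s * g) * y ^ (-α))))) (by fun_prop)]
      rw [lemC hα hδdef ht, lemD hδ0 hδ1]
      rw [← ENNReal.ofReal_mul (by positivity), ← ENNReal.ofReal_mul (by positivity)]
      rw [← ENNReal.ofReal_mul (by positivity)]
      congr 1
      rw [Real.mul_rpow hs.le hg.le]
      have hinv : α⁻¹ * δ⁻¹ = 2⁻¹ := by rw [← mul_inv, hαδ]
      linear_combination (2 * π * Real.Gamma (1 - δ) * s ^ δ * g ^ δ) * hinv
    have hintmeas : Measurable (fun p : EuclideanSpace ℝ (Fin 2) × ℝ =>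
        1 - negExp (ENNReal.ofReal (s * p.2 / ‖p.1‖ ^ α))) :=
      measurable_const.sub (measurable_negExp.comp hf)
    rw [lintegral_smul_measure, lintegral_prod_symm _ hintmeas.aemeasurable]
    rw [lintegral_congr_ae ((gammaMeasure_ae_pos hM).mono fun g hg => inner g hg)]
    rw [lintegral_const_mul _ (by fun_prop), lemE hδ0 hM]
    rw [← ENNReal.ofReal_mul (by positivity), smul_eq_mul, ← ENNReal.ofReal_mul hlam'.le]
    rw [negExp, if_neg ENNReal.ofReal_ne_top, ENNReal.toReal_ofReal (by positivity)]
    congr 2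
    rw [hΓrel]
    field_simp
end

section
/- For 0 < δ < 1, a positive integer M, and s > 0, the integral ∫₀^∞ (1 − (1 + s/r^α)^{−M}) r dr with α = 2/δ equals −(δ/2)·s^δ·Γ(M+δ)Γ(−δ)/Γ(M). In particular the integral is finite and positive. -/
open MeasureTheory Real Set


lemma betaMeas (c d : ℝ) : Measurable (fun x : ℝ => x ^ c * (1+x) ^ d) := by
  fun_prop

lemma betaIntegrable {a b : ℝ} (ha : 0 < a) (hb : 0 < b) :
    IntegrableOn (fun x : ℝ => x ^ (a-1) * (1+x) ^ (-(a+b))) (Ioi 0) := by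
  have hmeas : AEStronglyMeasurable (fun x : ℝ => x ^ (a-1) * (1+x) ^ (-(a+b))) volume := (betaMeas (a-1) (-(a+b))).aestronglyMeasurable
  have h1 : IntegrableOn (fun x : ℝ => x ^ (a-1) * (1+x) ^ (-(a+b))) (Ioc 0 1) := by
    have hg : IntegrableOn (fun x : ℝ => x ^ (a-1)) (Ioc (0:ℝ) 1) := by
      have := intervalIntegral.intervalIntegrable_rpow' (a := 0) (b := 1)
        (r := a - 1) (by linarith)
      rwa [intervalIntegrable_iff_integrableOn_Ioc_of_le zero_le_one] at this
    refine hg.mono' hmeas.restrict ?_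
    filter_upwards [ae_restrict_mem measurableSet_Ioc] with x hx
    have hx0 : 0 < x := hx.1
    rw [Real.norm_eq_abs, abs_mul, abs_of_nonneg (rpow_nonneg hx0.le _),
      abs_of_nonneg (rpow_nonneg (by linarith) _)]
    calc x ^ (a-1) * (1+x) ^ (-(a+b)) ≤ x ^ (a-1) * 1 :=
          mul_le_mul_of_nonneg_left
            (rpow_le_one_of_one_le_of_nonpos (by linarith) (by linarith))
            (rpow_nonneg hx0.le _)
      _ = x ^ (a-1) := mul_one _
  have h2 : IntegrableOn (fun x : ℝ => x ^ (a-1) * (1+x) ^ (-(a+b))) (Ioi 1) := by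
    have hg : IntegrableOn (fun x : ℝ => x ^ (-1-b)) (Ioi (1:ℝ)) :=
      integrableOn_Ioi_rpow_of_lt (by linarith) one_pos
    refine hg.mono' hmeas.restrict ?_
    filter_upwards [ae_restrict_mem measurableSet_Ioi] with x hx
    have hx0 : (0:ℝ) < x := lt_trans one_pos hx
    rw [Real.norm_eq_abs, abs_mul, abs_of_nonneg (rpow_nonneg hx0.le _),
      abs_of_nonneg (rpow_nonneg (by linarith) _)]
    calc x ^ (a-1) * (1+x) ^ (-(a+b)) ≤ x ^ (a-1) * x ^ (-(a+b)) :=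
          mul_le_mul_of_nonneg_left
            (rpow_le_rpow_of_nonpos hx0 (by linarith) (by linarith))
            (rpow_nonneg hx0.le _)
      _ = x ^ (-1-b) := by rw [← rpow_add hx0]; ring_nf
  have : Ioi (0:ℝ) = Ioc 0 1 ∪ Ioi 1 := (Ioc_union_Ioi_eq_Ioi zero_le_one).symm
  rw [this]
  exact h1.union h2
lemma gammaAux {q c : ℝ} (hq : -1 < q) (hc : 0 < c) :
    ∫ t in Ioi (0:ℝ), t ^ q * exp (-c * t) = c ^ (-(q+1)) * Gamma (q+1) := by
  have h := integral_rpow_mul_exp_neg_mul_rpow one_pos hq hc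
  simp only [rpow_one, div_one, one_mul, mul_one] at h
  simpa using h

lemma gammaAuxInt {q c : ℝ} (hq : -1 < q) (hc : 0 < c) :
    IntegrableOn (fun t : ℝ => t ^ q * exp (-c * t)) (Ioi 0) := by
  have h := integrableOn_rpow_mul_exp_neg_mul_rpow hq one_pos hc
  simpa only [rpow_one] using h

set_option maxHeartbeats 1000000 in
lemma betaValue {a b : ℝ} (ha : 0 < a) (hb : 0 < b) :
    ∫ x in Ioi (0:ℝ), x ^ (a-1) * (1+x) ^ (-(a+b)) = Gamma a * Gamma b / Gamma (a+b) := by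
  have hab : 0 < a + b := by linarith
  have hinner : ∀ x : ℝ, x ∈ Ioi (0:ℝ) →
      ∫ t in Ioi (0:ℝ), x ^ (a-1) * (t ^ (a+b-1) * exp (-(1+x) * t))
        = x ^ (a-1) * ((1+x) ^ (-(a+b)) * Gamma (a+b)) := by
    intro x hx
    have hx0 : (0:ℝ) < x := hx
    rw [integral_const_mul]
    congr 1
    have h := gammaAux (q := a+b-1) (by linarith) (show (0:ℝ) < 1+x by linarith)
    rwa [show a+b-1+1 = a+b by ring] at h
  have hFm : AEStronglyMeasurable
      (fun p : ℝ × ℝ => p.1 ^ (a-1) * (p.2 ^ (a+b-1) * exp (-(1+p.1) * p.2)))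
      ((volume.restrict (Ioi 0)).prod (volume.restrict (Ioi 0))) := by
    apply Measurable.aestronglyMeasurable
    fun_prop
  have hFint : Integrable
      (fun p : ℝ × ℝ => p.1 ^ (a-1) * (p.2 ^ (a+b-1) * exp (-(1+p.1) * p.2)))
      ((volume.restrict (Ioi 0)).prod (volume.restrict (Ioi 0))) := by
    rw [integrable_prod_iff hFm]
    constructor
    · filter_upwards [ae_restrict_mem measurableSet_Ioi] with x hx
      have hx0 : (0:ℝ) < x := hx
      exact (gammaAuxInt (q := a+b-1) (by linarith)
        (show (0:ℝ) < 1+x by linarith)).const_mul _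
    · have h2 : Integrable (fun x : ℝ => x ^ (a-1) * ((1+x) ^ (-(a+b)) * Gamma (a+b)))
          (volume.restrict (Ioi 0)) := by
        have h3 : Integrable (fun x : ℝ => (x ^ (a-1) * (1+x) ^ (-(a+b))) * Gamma (a+b))
            (volume.restrict (Ioi 0)) := (betaIntegrable ha hb).mul_const _
        refine h3.congr (ae_of_all _ fun x => by ring)
      refine Integrable.congr h2 ?_
      filter_upwards [ae_restrict_mem measurableSet_Ioi] with x hx
      rw [← hinner x hx]
      refine setIntegral_congr_fun measurableSet_Ioi fun t ht => ?_
      have hx0 : (0:ℝ) < x := hx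
      have ht0 : (0:ℝ) < t := ht
      show x ^ (a-1) * (t ^ (a+b-1) * exp (-(1+x) * t))
        = ‖x ^ (a-1) * (t ^ (a+b-1) * exp (-(1+x) * t))‖
      exact (norm_of_nonneg (by positivity)).symm
  have hswap := integral_integral_swap
    (f := fun x t : ℝ => x ^ (a-1) * (t ^ (a+b-1) * exp (-(1+x) * t))) hFint
  have houter : (∫ x in Ioi (0:ℝ), ∫ t in Ioi (0:ℝ),
        x ^ (a-1) * (t ^ (a+b-1) * exp (-(1+x) * t))) =
      Gamma (a+b) * ∫ x in Ioi (0:ℝ), x ^ (a-1) * (1+x) ^ (-(a+b)) := by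
    rw [setIntegral_congr_fun measurableSet_Ioi hinner, ← integral_const_mul]
    exact setIntegral_congr_fun measurableSet_Ioi fun x hx => by ring
  have hright : (∫ t in Ioi (0:ℝ), ∫ x in Ioi (0:ℝ),
        x ^ (a-1) * (t ^ (a+b-1) * exp (-(1+x) * t))) = Gamma a * Gamma b := by
    have hstep : ∀ t : ℝ, t ∈ Ioi (0:ℝ) →
        (∫ x in Ioi (0:ℝ), x ^ (a-1) * (t ^ (a+b-1) * exp (-(1+x) * t)))
          = Gamma a * (exp (-t) * t ^ (b-1)) := by
      intro t ht
      have ht0 : (0:ℝ) < t := ht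
      have h1 : ∀ x : ℝ, x ^ (a-1) * (t ^ (a+b-1) * exp (-(1+x) * t))
          = (t ^ (a+b-1) * exp (-t)) * (x ^ (a-1) * exp (-t * x)) := by
        intro x
        rw [show -(1+x) * t = -t + -t*x by ring, Real.exp_add]
        ring
      rw [setIntegral_congr_fun measurableSet_Ioi fun x _ => h1 x, integral_const_mul,
        gammaAux (by linarith) ht0, show a-1+1 = a by ring]
      rw [show t ^ (a+b-1) * exp (-t) * (t ^ (-a) * Gamma a)
            = Gamma a * (exp (-t) * (t ^ (a+b-1) * t ^ (-a))) by ring,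
        ← rpow_add ht0, show a+b-1+-a = b-1 by ring]
    rw [setIntegral_congr_fun measurableSet_Ioi hstep, integral_const_mul,
      ← Gamma_eq_integral hb]
  have hGab : Gamma (a+b) ≠ 0 := (Gamma_pos_of_pos hab).ne'
  have hkey := houter.symm.trans (hswap.trans hright)
  rw [eq_div_iff hGab]
  linear_combination hkey
lemma sumGamma (δ : ℝ) (hδ : 0 < δ) (M : ℕ) :
    δ * ∑ k ∈ Finset.range M, Gamma (k + δ) / Gamma (k+1) = Gamma (M + δ) / Gamma M := by
  induction M with
  | zero => simp [Real.Gamma_zero]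
  | succ M ih =>
    rw [Finset.sum_range_succ, mul_add, ih]
    have h1 : Gamma ((M:ℝ)+1+δ) = ((M:ℝ)+δ) * Gamma ((M:ℝ)+δ) := by
      rw [show (M:ℝ)+1+δ = ((M:ℝ)+δ)+1 by ring, Gamma_add_one (by positivity)]
    push_cast
    rw [h1]
    rcases Nat.eq_zero_or_pos M with h|h
    · subst h; simp [Real.Gamma_zero, Real.Gamma_one]
    · have hM0 : (0:ℝ) < M := by exact_mod_cast h
      have h2 : Gamma ((M:ℝ)+1) = M * Gamma M := Gamma_add_one hM0.ne'
      have hΓM : Gamma (M:ℝ) ≠ 0 := (Gamma_pos_of_pos hM0).ne'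
      rw [h2]
      field_simp

lemma telescope {y : ℝ} (hy : 0 < 1 + y) (M : ℕ) :
    1 - (1+y) ^ (-(M:ℝ)) = ∑ k ∈ Finset.range M, y * (1+y) ^ (-((k:ℝ)+1)) := by
  induction M with
  | zero => simp
  | succ M ih =>
    rw [Finset.sum_range_succ, ← ih]
    have h1 : (1+y) ^ (-(M:ℝ)) = (1+y) * (1+y) ^ (-((M:ℝ)+1)) := by
      rw [show -(M:ℝ) = -((M:ℝ)+1)+1 by ring, rpow_add_one hy.ne']
      ring
    push_cast
    rw [show -((M:ℝ)+1) = -((M:ℝ)+1) by ring]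
    nlinarith [h1]
lemma termIntegrable {δ s : ℝ} (hδ0 : 0 < δ) (hδ1 : δ < 1) (hs : 0 < s) (k : ℕ) :
    IntegrableOn (fun x : ℝ => x ^ (-δ) * (1+s*x) ^ (-((k:ℝ)+1))) (Ioi 0) := by
  have hb := betaIntegrable (a := 1-δ) (b := (k:ℝ)+δ) (by linarith) (by positivity)
  simp only [show (1:ℝ)-δ-1 = -δ by ring,
    show (1-δ)+((k:ℝ)+δ) = (k:ℝ)+1 by ring] at hb
  have h1 : IntegrableOn (fun x : ℝ => (s*x) ^ (-δ) * (1+s*x) ^ (-((k:ℝ)+1))) (Ioi 0) := by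
    have := (integrableOn_Ioi_comp_mul_left_iff
      (fun x : ℝ => x ^ (-δ) * (1+x) ^ (-((k:ℝ)+1))) 0 hs).mpr (by simpa using hb)
    simpa using this
  have h2 := h1.const_mul (s ^ δ)
  refine (integrableOn_congr_fun (fun x hx => ?_) measurableSet_Ioi).mpr h2
  have hx0 : (0:ℝ) < x := hx
  rw [mul_rpow hs.le hx0.le, ← mul_assoc, ← mul_assoc, ← rpow_add hs,
    add_neg_cancel, rpow_zero, one_mul]

lemma termValue {δ s : ℝ} (hδ0 : 0 < δ) (hδ1 : δ < 1) (hs : 0 < s) (k : ℕ) :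
    ∫ x in Ioi (0:ℝ), x ^ (-δ) * (1+s*x) ^ (-((k:ℝ)+1))
      = s ^ (δ-1) * (Gamma (1-δ) * Gamma ((k:ℝ)+δ) / Gamma ((k:ℝ)+1)) := by
  have hbv := betaValue (a := 1-δ) (b := (k:ℝ)+δ) (by linarith) (by positivity)
  simp only [show (1:ℝ)-δ-1 = -δ by ring,
    show (1-δ)+((k:ℝ)+δ) = (k:ℝ)+1 by ring] at hbv
  calc ∫ x in Ioi (0:ℝ), x ^ (-δ) * (1+s*x) ^ (-((k:ℝ)+1))
      = ∫ x in Ioi (0:ℝ), s ^ δ * ((s*x) ^ (-δ) * (1+s*x) ^ (-((k:ℝ)+1))) := by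
        refine setIntegral_congr_fun measurableSet_Ioi fun x hx => ?_
        have hx0 : (0:ℝ) < x := hx
        rw [mul_rpow hs.le hx0.le, ← mul_assoc, ← mul_assoc, ← rpow_add hs,
          add_neg_cancel, rpow_zero, one_mul]
    _ = s ^ δ * ∫ x in Ioi (0:ℝ),
          (fun y : ℝ => y ^ (-δ) * (1+y) ^ (-((k:ℝ)+1))) (s*x) := integral_const_mul _ _
    _ = s ^ δ * (s⁻¹ • ∫ y in Ioi (s*0), y ^ (-δ) * (1+y) ^ (-((k:ℝ)+1))) := by
        rw [integral_comp_mul_left_Ioi (fun y : ℝ => y ^ (-δ) * (1+y) ^ (-((k:ℝ)+1))) 0 hs]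
    _ = s ^ (δ-1) * (Gamma (1-δ) * Gamma ((k:ℝ)+δ) / Gamma ((k:ℝ)+1)) := by
        rw [mul_zero, smul_eq_mul, hbv, rpow_sub hs, rpow_one, ← mul_assoc]
        ring
noncomputable def pgflG1 (δ s : ℝ) (M : ℕ) : ℝ → ℝ :=
  fun y => 1 - (1 + s / y ^ (1/δ)) ^ (-(M:ℝ))


/-- **Radial integral for the singular path loss PGFL computation.**
For `0 < δ < 1`, a positive integer `M`, `s > 0`, and `α = 2/δ`,
`∫₀^∞ (1 − (1 + s/r^α)^{−M}) r dr = −(δ/2)·s^δ·Γ(M+δ)Γ(−δ)/Γ(M)`;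
in particular the integral is finite and positive. -/
theorem radial_pgfl_integral (δ : ℝ) (hδ0 : 0 < δ) (hδ1 : δ < 1)
    (M : ℕ) (hM : 0 < M) (s : ℝ) (hs : 0 < s) :
    (∫ r in Ioi (0 : ℝ), (1 - (1 + s / r ^ (2 / δ)) ^ (-(M : ℝ))) * r =
      -(δ / 2) * s ^ δ * Real.Gamma (M + δ) * Real.Gamma (-δ) / Real.Gamma M) ∧
    IntegrableOn (fun r : ℝ => (1 - (1 + s / r ^ (2 / δ)) ^ (-(M : ℝ))) * r)
      (Ioi 0) ∧
    0 < ∫ r in Ioi (0 : ℝ), (1 - (1 + s / r ^ (2 / δ)) ^ (-(M : ℝ))) * r := by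
  have hδ : δ ≠ 0 := hδ0.ne'
  have hMR : (0:ℝ) < M := by exact_mod_cast hM
  -- pointwise identity for the substitution r ↦ r^2
  have hpt1 : ∀ x ∈ Ioi (0:ℝ), (1 - (1 + s / x ^ (2/δ)) ^ (-(M:ℝ))) * x
      = (1/2 : ℝ) * ((|(2:ℝ)| * x ^ ((2:ℝ)-1)) • pgflG1 δ s M (x ^ (2:ℝ))) := by
    intro x hx
    have hx0 : (0:ℝ) < x := hx
    simp only [pgflG1, smul_eq_mul]
    rw [← Real.rpow_mul hx0.le, show (2:ℝ) * (1/δ) = 2/δ by ring,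
      abs_of_pos (by norm_num : (0:ℝ) < 2), show (2:ℝ)-1 = 1 by norm_num, rpow_one]
    ring
  -- pointwise identity for the substitution y ↦ y^(-δ) and telescoping
  have hpt2 : ∀ x ∈ Ioi (0:ℝ), (|(-δ)| * x ^ (-δ-1)) • pgflG1 δ s M (x ^ (-δ))
      = ∑ k ∈ Finset.range M, δ * s * (x ^ (-δ) * (1+s*x) ^ (-((k:ℝ)+1))) := by
    intro x hx
    have hx0 : (0:ℝ) < x := hx
    have hsx : (0:ℝ) < 1 + s*x := by positivity
    simp only [pgflG1, smul_eq_mul]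
    rw [← Real.rpow_mul hx0.le, show -δ*(1/δ) = -1 by field_simp, rpow_neg_one,
      show s / x⁻¹ = s * x from by field_simp, abs_neg, abs_of_pos hδ0, telescope hsx M, Finset.mul_sum]
    refine Finset.sum_congr rfl fun k _ => ?_
    have hxx : x ^ (-δ-1) * x = x ^ (-δ) := by
      rw [← rpow_add_one hx0.ne' (-δ-1)]
      congr 1
      ring
    calc δ * x ^ (-δ-1) * (s*x*(1+s*x) ^ (-((k:ℝ)+1)))
        = δ * s * ((x ^ (-δ-1) * x) * (1+s*x) ^ (-((k:ℝ)+1))) := by ring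
      _ = δ * s * (x ^ (-δ) * (1+s*x) ^ (-((k:ℝ)+1))) := by rw [hxx]
  -- integrability of the expanded sum
  have hsum_int : IntegrableOn (fun x : ℝ => ∑ k ∈ Finset.range M,
      δ * s * (x ^ (-δ) * (1+s*x) ^ (-((k:ℝ)+1)))) (Ioi 0) :=
    integrable_finset_sum _ fun k _ => ((termIntegrable hδ0 hδ1 hs k).const_mul _)
  have hg1int : IntegrableOn (pgflG1 δ s M) (Ioi 0) := by
    rw [← integrableOn_Ioi_comp_rpow_iff _ (neg_ne_zero.mpr hδ)]
    exact (integrableOn_congr_fun hpt2 measurableSet_Ioi).mpr hsum_int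
  have hfint : IntegrableOn
      (fun r : ℝ => (1 - (1 + s / r ^ (2/δ)) ^ (-(M:ℝ))) * r) (Ioi 0) := by
    have h := (integrableOn_Ioi_comp_rpow_iff (pgflG1 δ s M) two_ne_zero).mpr hg1int
    have h2 := h.const_mul (1/2 : ℝ)
    exact (integrableOn_congr_fun hpt1 measurableSet_Ioi).mpr h2
  -- value computation
  have hval : (∫ r in Ioi (0:ℝ), (1 - (1 + s / r ^ (2/δ)) ^ (-(M:ℝ))) * r)
      = (1/2) * ∫ y in Ioi (0:ℝ), pgflG1 δ s M y := by
    rw [setIntegral_congr_fun measurableSet_Ioi hpt1, integral_const_mul,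
      integral_comp_rpow_Ioi _ (two_ne_zero)]
  have hval2 : (∫ y in Ioi (0:ℝ), pgflG1 δ s M y)
      = ∑ k ∈ Finset.range M,
          δ * s * (s ^ (δ-1) * (Gamma (1-δ) * Gamma ((k:ℝ)+δ) / Gamma ((k:ℝ)+1))) := by
    rw [← integral_comp_rpow_Ioi (pgflG1 δ s M) (neg_ne_zero.mpr hδ),
      setIntegral_congr_fun measurableSet_Ioi hpt2,
      integral_finset_sum _ (fun k _ => ((termIntegrable hδ0 hδ1 hs k).const_mul _))]
    exact Finset.sum_congr rfl fun k _ => by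
      rw [integral_const_mul, termValue hδ0 hδ1 hs k]
  have hsum : (∑ k ∈ Finset.range M,
        δ * s * (s ^ (δ-1) * (Gamma (1-δ) * Gamma ((k:ℝ)+δ) / Gamma ((k:ℝ)+1))))
      = s ^ δ * Gamma (1-δ) * (Gamma ((M:ℝ)+δ) / Gamma (M:ℝ)) := by
    have hss : s * s ^ (δ-1) = s ^ δ := by
      rw [mul_comm, ← Real.rpow_add_one hs.ne', sub_add_cancel]
    have hstep : (∑ k ∈ Finset.range M,
          δ * s * (s ^ (δ-1) * (Gamma (1-δ) * Gamma ((k:ℝ)+δ) / Gamma ((k:ℝ)+1))))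
        = (s * s ^ (δ-1)) * Gamma (1-δ) *
            (δ * ∑ k ∈ Finset.range M, Gamma ((k:ℝ)+δ) / Gamma ((k:ℝ)+1)) := by
      simp only [Finset.mul_sum]
      exact Finset.sum_congr rfl fun k _ => by ring
    rw [hstep, hss, sumGamma δ hδ0 M]
  have hΓ : Gamma (1-δ) = -δ * Gamma (-δ) := by
    rw [show (1:ℝ)-δ = -δ+1 by ring, Gamma_add_one (neg_ne_zero.mpr hδ)]
  have hfinal : (∫ r in Ioi (0:ℝ), (1 - (1 + s / r ^ (2/δ)) ^ (-(M:ℝ))) * r)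
      = (1/2) * (s ^ δ * Gamma (1-δ) * (Gamma ((M:ℝ)+δ) / Gamma (M:ℝ))) := by
    rw [hval, hval2, hsum]
  refine ⟨?_, hfint, ?_⟩
  · rw [hfinal, hΓ]; ring
  · rw [hfinal]
    have h1 : 0 < Gamma (1-δ) := Gamma_pos_of_pos (by linarith)
    have h2 : 0 < Gamma ((M:ℝ)+δ) := Gamma_pos_of_pos (by positivity)
    have h3 : 0 < Gamma (M:ℝ) := Gamma_pos_of_pos hMR
    have h4 : (0:ℝ) < s ^ δ := rpow_pos_of_pos hs δ
    positivity
end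

section
/- Let X and Y be independent nonnegative random variables where the Laplace transform of X is M_X(z) = exp(Γ_δ (zP_b)^δ) with Γ_δ < 0, 0 < δ < 1, P_b > 0, and Y = P_u σ² E with E exponential(1), P_u σ² > 0. Then E[ln(1 + X/(Y+1))] = ∫₀^∞ (1 − exp(Γ_δ (zP_b)^δ)) e^{−z} / (z(1 + P_u σ² z)) dz, and this integral is finite. -/
open MeasureTheory ProbabilityTheory Real Set

lemma aux_exp_int (t : ℝ) (ht : 0 < t) : ∫ z in Ioi (0:ℝ), rexp (-(t*z)) = 1/t := by
  have h := integral_comp_mul_left_Ioi (fun x => rexp (-x)) 0 ht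
  simp only [mul_zero, integral_exp_neg_Ioi, neg_zero, exp_zero, smul_eq_mul, mul_one] at h
  rw [h]; rw [one_div]

lemma aux_exp_intOn (t : ℝ) (ht : 0 < t) :
    IntegrableOn (fun z => rexp (-(t*z))) (Ioi (0:ℝ)) := by
  simpa [neg_mul] using exp_neg_integrableOn_Ioi 0 ht

lemma aux_ivl (b c z : ℝ) (hz : 0 < z) :
    ∫ t in b..c, rexp (-(t*z)) = (rexp (-(b*z)) - rexp (-(c*z)))/z := by
  have hd : ∀ t : ℝ, HasDerivAt (fun t => -rexp (-(t*z))/z) (rexp (-(t*z))) t := by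
    intro t
    have h1 : HasDerivAt (fun t : ℝ => -(t*z)) (-z) t := (hasDerivAt_mul_const z).neg
    have h2 := (Real.hasDerivAt_exp (-(t*z))).comp t h1
    have h3 := (h2.div_const z).neg
    have h4 : HasDerivAt (fun t => -rexp (-(t*z))/z) (-(rexp (-(t*z)) * -z) / z) t := h2.neg.div_const z
    simpa [Function.comp, neg_div, mul_comm, mul_div_assoc, mul_div_cancel_left₀ _ hz.ne'] using h4
  rw [intervalIntegral.integral_eq_sub_of_hasDerivAt (fun t _ => hd t)
      ((Real.continuous_exp.comp (by continuity)).intervalIntegrable b c)]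
  field_simp
  ring

lemma frullani {b c : ℝ} (hb : 0 < b) (hbc : b ≤ c) :
    ∫⁻ z in Ioi (0:ℝ), ENNReal.ofReal ((rexp (-(b*z)) - rexp (-(c*z)))/z)
      = ENNReal.ofReal (Real.log (c/b)) := by
  have hc : 0 < c := lt_of_lt_of_le hb hbc
  have stepA : ∀ z ∈ Ioi (0:ℝ),
      ENNReal.ofReal ((rexp (-(b*z)) - rexp (-(c*z)))/z)
        = ∫⁻ t in Icc b c, ENNReal.ofReal (rexp (-(t*z))) := by
    intro z hz
    rw [mem_Ioi] at hz
    have hI : ∫ t in Icc b c, rexp (-(t*z)) = (rexp (-(b*z)) - rexp (-(c*z)))/z := by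
      rw [integral_Icc_eq_integral_Ioc, ← intervalIntegral.integral_of_le hbc]
      exact aux_ivl b c z hz
    rw [← hI]
    exact ofReal_integral_eq_lintegral_ofReal
      ((Real.continuous_exp.comp (by continuity)).integrableOn_Icc)
      (ae_of_all _ fun t => (Real.exp_pos _).le)
  rw [setLIntegral_congr_fun measurableSet_Ioi stepA]
  have hswap : ∫⁻ z in Ioi (0:ℝ), ∫⁻ t in Icc b c, ENNReal.ofReal (rexp (-(t*z)))
      = ∫⁻ t in Icc b c, ∫⁻ z in Ioi (0:ℝ), ENNReal.ofReal (rexp (-(t*z))) := by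
    apply lintegral_lintegral_swap
    apply Measurable.aemeasurable
    exact ENNReal.measurable_ofReal.comp
      (Real.measurable_exp.comp (measurable_snd.mul measurable_fst).neg)
  rw [hswap]
  have stepC : ∀ t ∈ Icc b c,
      (∫⁻ z in Ioi (0:ℝ), ENNReal.ofReal (rexp (-(t*z)))) = ENNReal.ofReal (1/t) := by
    intro t ht
    have ht0 : 0 < t := lt_of_lt_of_le hb ht.1
    rw [← ofReal_integral_eq_lintegral_ofReal (aux_exp_intOn t ht0)
      (ae_of_all _ fun z => (Real.exp_pos _).le), aux_exp_int t ht0]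
  rw [setLIntegral_congr_fun measurableSet_Icc stepC]
  have hIone : ∫ t in Icc b c, 1/t = Real.log (c/b) := by
    rw [integral_Icc_eq_integral_Ioc, ← intervalIntegral.integral_of_le hbc]
    exact integral_one_div (by
      rw [uIcc_of_le hbc]
      exact fun h => absurd (h.1) (not_le.mpr hb))
  rw [← hIone]
  refine (ofReal_integral_eq_lintegral_ofReal ?_ ?_).symm
  · exact (ContinuousOn.div continuousOn_const continuousOn_id
      (fun t ht => (lt_of_lt_of_le hb ht.1).ne')).integrableOn_compact isCompact_Icc
  · filter_upwards [ae_restrict_mem measurableSet_Icc] with t ht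
    have h0 : 0 < t := lt_of_lt_of_le hb ht.1
    positivity

lemma expMeasure_Iio_zero : expMeasure 1 (Iio 0) = 0 := by
  rw [expMeasure, gammaMeasure, withDensity_apply _ measurableSet_Iio]
  exact lintegral_gammaPDF_of_nonpos le_rfl

lemma exp_laplace_lintegral (c : ℝ) (hc : 0 < c) :
    ∫⁻ t, ENNReal.ofReal (rexp (-(c*t))) ∂(expMeasure 1) = ENNReal.ofReal (1/(1+c)) := by
  have h1c : (0:ℝ) < 1 + c := by linarith
  have hf : Measurable (gammaPDF 1 1) := (measurable_gammaPDFReal 1 1).ennreal_ofReal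
  have hg : Measurable fun t : ℝ => ENNReal.ofReal (rexp (-(c*t))) := by
    exact ENNReal.measurable_ofReal.comp (Real.measurable_exp.comp (measurable_const_mul c).neg)
  rw [expMeasure, gammaMeasure, lintegral_withDensity_eq_lintegral_mul _ hf hg]
  have hsplit := lintegral_add_compl (μ := (volume : Measure ℝ))
    (fun t => (gammaPDF 1 1 t) * ENNReal.ofReal (rexp (-(c*t)))) (measurableSet_Iio (a := (0:ℝ)))
  have h0 : ∫⁻ t in Iio (0:ℝ), (gammaPDF 1 1 t) * ENNReal.ofReal (rexp (-(c*t))) = 0 := by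
    rw [setLIntegral_congr_fun measurableSet_Iio
      (fun t (ht : t < 0) => by rw [gammaPDF_of_neg ht, zero_mul])]
    simp
  have h2 : ∫⁻ t in Ici (0:ℝ), (gammaPDF 1 1 t) * ENNReal.ofReal (rexp (-(c*t)))
      = ENNReal.ofReal (1/(1+c)) := by
    have heq : ∀ t ∈ Ici (0:ℝ), (gammaPDF 1 1 t) * ENNReal.ofReal (rexp (-(c*t)))
        = ENNReal.ofReal (rexp (-((1+c)*t))) := by
      intro t ht
      have : gammaPDF 1 1 t = exponentialPDF 1 t := rfl
      rw [this, exponentialPDF_of_nonneg ht, one_mul, ← ENNReal.ofReal_mul (exp_pos _).le,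
        ← Real.exp_add]
      ring_nf
    rw [setLIntegral_congr_fun measurableSet_Ici heq,
      setLIntegral_congr (Ioi_ae_eq_Ici (a := (0:ℝ))).symm,
      ← ofReal_integral_eq_lintegral_ofReal (aux_exp_intOn _ h1c)
        (ae_of_all _ fun z => (Real.exp_pos _).le), aux_exp_int _ h1c]
  show ∫⁻ t, (gammaPDF 1 1 t) * ENNReal.ofReal (rexp (-(c*t))) = ENNReal.ofReal (1/(1+c))
  calc ∫⁻ t, (gammaPDF 1 1 t) * ENNReal.ofReal (rexp (-(c*t)))
      = (∫⁻ t in Iio (0:ℝ), (gammaPDF 1 1 t) * ENNReal.ofReal (rexp (-(c*t))))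
        + ∫⁻ t in (Iio (0:ℝ))ᶜ, (gammaPDF 1 1 t) * ENNReal.ofReal (rexp (-(c*t))) := by
        rw [hsplit]
    _ = ENNReal.ofReal (1/(1+c)) := by rw [h0, zero_add, compl_Iio]; exact h2

lemma exp_laplace (c : ℝ) (hc : 0 < c) :
    ∫ t, rexp (-(c*t)) ∂(expMeasure 1) = 1/(1+c) := by
  have h1c : (0:ℝ) < 1 + c := by linarith
  rw [integral_eq_lintegral_of_nonneg_ae (ae_of_all _ fun t => (exp_pos _).le)
    ((Real.continuous_exp.comp (by continuity)).aestronglyMeasurable),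
    exp_laplace_lintegral c hc, ENNReal.toReal_ofReal (by positivity)]

/-- **Average downlink rate with shot-noise signal and exponential loopback
interference.** If `X` has Laplace transform `M_X(z) = exp(Γ_δ (zP_b)^δ)`
(`Γ_δ < 0`, `0 < δ < 1`, `P_b > 0`) and `Y = P_u σ² E` with `E ~ Exp(1)`
(`P_u σ² > 0`) independent of `X`, then
`E[ln(1 + X/(Y+1))] = ∫₀^∞ (1 − exp(Γ_δ (zP_b)^δ)) e^{−z}/(z(1 + P_u σ² z)) dz`,
and this integral is finite. -/
theorem average_rate_shot_noise_exponential_LI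
    {Ω : Type*} [MeasurableSpace Ω] (μ : Measure Ω) [IsProbabilityMeasure μ]
    (Γδ δ Pb a : ℝ) (hΓ : Γδ < 0) (hδ0 : 0 < δ) (hδ1 : δ < 1)
    (hPb : 0 < Pb) (ha : 0 < a)  -- `a = P_u σ²`
    (X E : Ω → ℝ) (hX : Measurable X) (hE : Measurable E)
    (hXpos : ∀ ω, 0 ≤ X ω)
    (hXlaw : ∀ z : ℝ, 0 < z →
      ∫ ω, Real.exp (-(z * X ω)) ∂μ = Real.exp (Γδ * (z * Pb) ^ δ))
    (hElaw : Measure.map E μ = expMeasure 1)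
    (hindep : IndepFun X E μ) :
    (∫ ω, Real.log (1 + X ω / (a * E ω + 1)) ∂μ =
      ∫ z in Ioi (0 : ℝ),
        (1 - Real.exp (Γδ * (z * Pb) ^ δ)) * Real.exp (-z) / (z * (1 + a * z))) ∧
    IntegrableOn (fun z : ℝ =>
        (1 - Real.exp (Γδ * (z * Pb) ^ δ)) * Real.exp (-z) / (z * (1 + a * z)))
      (Ioi 0) := by
  -- notation
  set R : ℝ → ℝ := fun z =>
    (1 - Real.exp (Γδ * (z * Pb) ^ δ)) * Real.exp (-z) / (z * (1 + a * z)) with hR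
  set F : Ω → ℝ → ℝ := fun ω z =>
    (rexp (-((a * E ω + 1) * z)) - rexp (-((X ω + (a * E ω + 1)) * z))) / z with hF
  -- E is a.e. nonnegative
  have hEae : ∀ᵐ ω ∂μ, 0 ≤ E ω := by
    have hset : μ (E ⁻¹' (Iio 0)) = 0 := by
      rw [← Measure.map_apply hE measurableSet_Iio, hElaw]
      exact expMeasure_Iio_zero
    rw [ae_iff]
    convert hset using 2
    ext ω
    simp [not_le]
  -- nonnegativity of R on `Ioi 0`
  have hRnn : ∀ z ∈ Ioi (0:ℝ), 0 ≤ R z := by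
    intro z hz
    rw [mem_Ioi] at hz
    have h1 : Γδ * (z * Pb) ^ δ ≤ 0 :=
      mul_nonpos_of_nonpos_of_nonneg hΓ.le (rpow_nonneg (by positivity) δ)
    have h2 : rexp (Γδ * (z * Pb) ^ δ) ≤ 1 := Real.exp_le_one_iff.mpr h1
    have h3 : (0:ℝ) < z * (1 + a * z) := by positivity
    apply div_nonneg _ h3.le
    have := Real.exp_pos (-z)
    nlinarith
  -- integrability of R (second goal)
  have hRmeas : Measurable R := by
    apply Measurable.div
    · exact ((measurable_const.sub
        ((((measurable_id.mul_const Pb).pow_const _).const_mul Γδ).exp)).mul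
        (measurable_id.neg.exp))
    · exact measurable_id.mul (measurable_const.add (measurable_id.const_mul a))
  have hRint : IntegrableOn R (Ioi (0:ℝ)) := by
    set C : ℝ := (-Γδ) * Pb ^ δ with hC
    have hC0 : 0 < C := by
      have := rpow_pos_of_pos hPb δ
      rw [hC]; nlinarith
    have hdom : IntegrableOn (fun z => C * (rexp (-z) * z ^ (δ - 1))) (Ioi (0:ℝ)) :=
      (Real.GammaIntegral_convergent hδ0).const_mul C
    apply hdom.mono' hRmeas.aestronglyMeasurable
    filter_upwards [ae_restrict_mem measurableSet_Ioi] with z hz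
    rw [mem_Ioi] at hz
    have hb1 : 1 - rexp (Γδ * (z * Pb) ^ δ) ≤ (-Γδ) * (z * Pb) ^ δ := by
      have := Real.add_one_le_exp (Γδ * (z * Pb) ^ δ)
      linarith
    have hnum_nn : 0 ≤ (1 - rexp (Γδ * (z * Pb) ^ δ)) * rexp (-z) := by
      have h1 : Γδ * (z * Pb) ^ δ ≤ 0 :=
        mul_nonpos_of_nonpos_of_nonneg hΓ.le (rpow_nonneg (by positivity) δ)
      have h2 : rexp (Γδ * (z * Pb) ^ δ) ≤ 1 := Real.exp_le_one_iff.mpr h1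
      have := (Real.exp_pos (-z)).le
      nlinarith
    rw [Real.norm_of_nonneg (hRnn z hz)]
    have hden : z ≤ z * (1 + a * z) := by nlinarith [mul_pos ha (mul_pos hz hz)]
    have hz' : (0:ℝ) < z * (1 + a * z) := by positivity
    have step1 : R z ≤ (1 - rexp (Γδ * (z * Pb) ^ δ)) * rexp (-z) / z := by
      rw [hR]
      exact div_le_div_of_nonneg_left hnum_nn hz hden
    have step2 : (1 - rexp (Γδ * (z * Pb) ^ δ)) * rexp (-z) / z
        ≤ ((-Γδ) * (z * Pb) ^ δ) * rexp (-z) / z := by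
      have hnn2 : 0 ≤ (-Γδ) * (z * Pb) ^ δ :=
        mul_nonneg (by linarith) (rpow_nonneg (by positivity) δ)
      exact div_le_div₀ (mul_nonneg hnn2 (Real.exp_pos _).le)
        (mul_le_mul_of_nonneg_right hb1 (Real.exp_pos _).le) hz le_rfl
    have step3 : ((-Γδ) * (z * Pb) ^ δ) * rexp (-z) / z
        = C * (rexp (-z) * z ^ (δ - 1)) := by
      rw [Real.mul_rpow hz.le hPb.le, Real.rpow_sub_one hz.ne' δ, hC]
      field_simp
    calc R z ≤ (1 - rexp (Γδ * (z * Pb) ^ δ)) * rexp (-z) / z := step1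
      _ ≤ ((-Γδ) * (z * Pb) ^ δ) * rexp (-z) / z := step2
      _ = C * (rexp (-z) * z ^ (δ - 1)) := step3
  refine ⟨?_, hRint⟩
  -- law of a*E: Laplace transform
  have hEz : ∀ z : ℝ, 0 < z → ∫ ω, rexp (-(z * a * E ω)) ∂μ = 1/(1 + a*z) := by
    intro z hz
    have hza : 0 < z * a := mul_pos hz ha
    have hgsm : AEStronglyMeasurable (fun t : ℝ => rexp (-(z * a * t))) (Measure.map E μ) :=
      (Real.measurable_exp.comp (measurable_const_mul (z*a)).neg).aestronglyMeasurable
    have hmap : ∫ ω, rexp (-(z * a * E ω)) ∂μ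
        = ∫ t, rexp (-(z * a * t)) ∂(Measure.map E μ) :=
      (integral_map hE.aemeasurable hgsm).symm
    rw [hmap, hElaw, exp_laplace (z*a) hza, mul_comm z a]
  -- product via independence
  have hprod : ∀ z : ℝ, 0 < z →
      ∫ ω, rexp (-(z * X ω)) * rexp (-(z * a * E ω)) ∂μ
        = rexp (Γδ * (z * Pb) ^ δ) * (1/(1 + a*z)) := by
    intro z hz
    have hi : IndepFun (fun ω => rexp (-(z * X ω))) (fun ω => rexp (-(z * a * E ω))) μ :=
      hindep.comp (Real.measurable_exp.comp (measurable_const_mul z).neg)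
        (Real.measurable_exp.comp (measurable_const_mul (z*a)).neg)
    have hm1 : AEStronglyMeasurable (fun ω => rexp (-(z * X ω))) μ :=
      (Real.measurable_exp.comp ((hX.const_mul z).neg)).aestronglyMeasurable
    have hm2 : AEStronglyMeasurable (fun ω => rexp (-(z * a * E ω))) μ :=
      (Real.measurable_exp.comp ((hE.const_mul (z*a)).neg)).aestronglyMeasurable
    have h := hi.integral_mul_eq_mul_integral hm1 hm2
    rw [hXlaw z hz, hEz z hz] at h
    exact h
  -- integrability of the two exponential terms
  have hI1 : ∀ z : ℝ, 0 < z → Integrable (fun ω => rexp (-((a * E ω + 1) * z))) μ := by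
    intro z hz
    refine Integrable.mono' (integrable_const 1)
      (Real.measurable_exp.comp
        ((((hE.const_mul a).add_const 1).mul_const z).neg)).aestronglyMeasurable ?_
    filter_upwards [hEae] with ω hω
    rw [Real.norm_of_nonneg (exp_pos _).le, Real.exp_le_one_iff]
    have h0 : 0 ≤ (a * E ω + 1) * z := mul_nonneg (by nlinarith) hz.le
    linarith
  have hI2 : ∀ z : ℝ, 0 < z →
      Integrable (fun ω => rexp (-((X ω + (a * E ω + 1)) * z))) μ := by
    intro z hz
    refine Integrable.mono' (integrable_const 1)
      (Real.measurable_exp.comp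
        (((hX.add ((hE.const_mul a).add_const 1)).mul_const z).neg)).aestronglyMeasurable ?_
    filter_upwards [hEae] with ω hω
    rw [Real.norm_of_nonneg (exp_pos _).le, Real.exp_le_one_iff]
    have h0 : 0 ≤ (X ω + (a * E ω + 1)) * z := mul_nonneg (by nlinarith [hXpos ω]) hz.le
    linarith
  -- the two expectations
  have hint1 : ∀ z : ℝ, 0 < z →
      ∫ ω, rexp (-((a * E ω + 1) * z)) ∂μ = rexp (-z) * (1/(1 + a*z)) := by
    intro z hz
    have heq : (fun ω => rexp (-((a * E ω + 1) * z)))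
        = fun ω => rexp (-z) * rexp (-(z * a * E ω)) := by
      funext ω
      rw [← Real.exp_add]
      congr 1
      ring
    rw [heq, integral_const_mul, hEz z hz]
  have hint2 : ∀ z : ℝ, 0 < z →
      ∫ ω, rexp (-((X ω + (a * E ω + 1)) * z)) ∂μ
        = rexp (-z) * (rexp (Γδ * (z * Pb) ^ δ) * (1/(1 + a*z))) := by
    intro z hz
    have heq : (fun ω => rexp (-((X ω + (a * E ω + 1)) * z)))
        = fun ω => rexp (-z) * (rexp (-(z * X ω)) * rexp (-(z * a * E ω))) := by
      funext ω
      rw [← Real.exp_add, ← Real.exp_add]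
      congr 1
      ring
    rw [heq, integral_const_mul, hprod z hz]
  have hFint : ∀ z : ℝ, 0 < z → Integrable (fun ω => F ω z) μ := by
    intro z hz
    simp only [hF]
    exact ((hI1 z hz).sub (hI2 z hz)).div_const z
  have hinner : ∀ z ∈ Ioi (0:ℝ), ∫ ω, F ω z ∂μ = R z := by
    intro z hz
    rw [mem_Ioi] at hz
    have h1az : (0:ℝ) < 1 + a * z := by positivity
    simp only [hF, hR]
    rw [integral_div, integral_sub (hI1 z hz) (hI2 z hz), hint1 z hz, hint2 z hz]
    field_simp
  -- nonnegativity of F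
  have hFnn : ∀ z ∈ Ioi (0:ℝ), ∀ ω, 0 ≤ F ω z := by
    intro z hz ω
    rw [mem_Ioi] at hz
    simp only [hF]
    apply div_nonneg _ hz.le
    have h1 : (a * E ω + 1) * z ≤ (X ω + (a * E ω + 1)) * z := by nlinarith [hXpos ω]
    have h2 := Real.exp_le_exp.mpr (neg_le_neg h1)
    linarith
  have hfix : ∀ z ∈ Ioi (0:ℝ),
      (∫⁻ ω, ENNReal.ofReal (F ω z) ∂μ) = ENNReal.ofReal (R z) := by
    intro z hz
    rw [← ofReal_integral_eq_lintegral_ofReal (hFint z (mem_Ioi.mp hz))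
      (ae_of_all _ (hFnn z hz)), hinner z hz]
  -- measurability of the uncurried function
  have hmF : Measurable (Function.uncurry fun ω z => ENNReal.ofReal (F ω z)) := by
    have hform : (Function.uncurry fun ω z => ENNReal.ofReal (F ω z))
        = fun p : Ω × ℝ => ENNReal.ofReal
          ((rexp (-((a * E p.1 + 1) * p.2)) - rexp (-((X p.1 + (a * E p.1 + 1)) * p.2))) / p.2)
        := rfl
    rw [hform]
    apply ENNReal.measurable_ofReal.comp
    apply Measurable.div _ measurable_snd
    apply Measurable.sub
    · exact Real.measurable_exp.comp
        (((((hE.comp measurable_fst).const_mul a).add_const 1).mul measurable_snd)).neg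
    · exact Real.measurable_exp.comp
        ((((hX.comp measurable_fst).add
          (((hE.comp measurable_fst).const_mul a).add_const 1)).mul measurable_snd)).neg
  -- pointwise Frullani representation
  have hlog_eq : ∀ᵐ ω ∂μ, ENNReal.ofReal (Real.log (1 + X ω / (a * E ω + 1)))
      = ∫⁻ z in Ioi (0:ℝ), ENNReal.ofReal (F ω z) := by
    filter_upwards [hEae] with ω hω
    have hb : 0 < a * E ω + 1 := by nlinarith
    have hbc : a * E ω + 1 ≤ X ω + (a * E ω + 1) := by nlinarith [hXpos ω]
    have hfr := frullani hb hbc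
    have harg : (X ω + (a * E ω + 1)) / (a * E ω + 1) = 1 + X ω / (a * E ω + 1) := by
      field_simp
      ring
    rw [harg] at hfr
    exact hfr.symm
  -- measurability / nonnegativity of LHS integrand
  have hlogmeas : Measurable fun ω => Real.log (1 + X ω / (a * E ω + 1)) :=
    Real.measurable_log.comp ((hX.div ((hE.const_mul a).add_const 1)).const_add 1)
  have hlognn : 0 ≤ᵐ[μ] fun ω => Real.log (1 + X ω / (a * E ω + 1)) := by
    filter_upwards [hEae] with ω hω
    apply Real.log_nonneg
    have hb : 0 < a * E ω + 1 := by nlinarith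
    have h2 : 0 ≤ X ω / (a * E ω + 1) := div_nonneg (hXpos ω) hb.le
    linarith
  -- the lintegral chain
  have hL : ∫⁻ ω, ENNReal.ofReal (Real.log (1 + X ω / (a * E ω + 1))) ∂μ
      = ENNReal.ofReal (∫ z in Ioi (0:ℝ), R z) := by
    rw [lintegral_congr_ae hlog_eq, lintegral_lintegral_swap hmF.aemeasurable,
      setLIntegral_congr_fun measurableSet_Ioi hfix]
    exact (ofReal_integral_eq_lintegral_ofReal hRint (by
      filter_upwards [ae_restrict_mem measurableSet_Ioi] with z hz
      exact hRnn z hz)).symm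
  have hRpos : 0 ≤ ∫ z in Ioi (0:ℝ), R z := setIntegral_nonneg measurableSet_Ioi hRnn
  rw [integral_eq_lintegral_of_nonneg_ae hlognn hlogmeas.aestronglyMeasurable, hL,
    ENNReal.toReal_ofReal hRpos]
end
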